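/- Let (G, F) be an inverse sequence of twinned graph homomorphisms, with inverse limit vertex set V_G and relation E_G. Then for every x ∈ V_G there exists y ∈ V_G with (x, y) ∈ E_G; that is, the set E_G x = {y ∈ V_G : (x, y) ∈ E_G} is nonempty. -/

import Mathlib

/-- An inverse sequence of twinned graph homomorphisms `(𝒢, ℱ)`: graphs
`G_i = (V i, EG i)` and `F_i = (V i, EF i)` on the same finite vertex sets, sharing
connecting maps `φ i : V (i+1) → V i`, satisfying conditions (DS0)–(DS3b). -/
structure TwinnedSeq : Type 1 where
  V : ℕ → Type
  fintype : ∀ i, Fintype (V i)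
  EG : ∀ i, V i → V i → Prop
  EF : ∀ i, V i → V i → Prop
  φ : ∀ i, V (i + 1) → V i
  /-- (DS0) `G_0` has exactly one vertex. -/
  ds0_nonempty : Nonempty (V 0)
  ds0_subsingleton : ∀ v w : V 0, v = w
  /-- (DS1) each `φ i` is an edge-surjective graph homomorphism for `𝒢`, and every
  vertex of every `G_i` has an outgoing edge. -/
  ds1_hom : ∀ i, ∀ u v : V (i + 1), EG (i + 1) u v → EG i (φ i u) (φ i v)
  ds1_edge_surj : ∀ i, ∀ u v : V i, EG i u v →
    ∃ a b : V (i + 1), EG (i + 1) a b ∧ φ i a = u ∧ φ i b = v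
  ds1_out : ∀ i, ∀ v : V i, ∃ w, EG i v w
  /-- (DS2) each `φ i` is a graph homomorphism for `ℱ`, each `EF i` is symmetric and
  reflexive. -/
  ds2_hom : ∀ i, ∀ u v : V (i + 1), EF (i + 1) u v → EF i (φ i u) (φ i v)
  ds2_symm : ∀ i, ∀ u v : V i, EF i u v → EF i v u
  ds2_refl : ∀ i, ∀ v : V i, EF i v v
  /-- (DS3) -/
  ds3 : ∀ i, ∀ a b a' b' : V (i + 1),
    EF (i + 1) a b → EG (i + 1) a a' → EG (i + 1) b b' → EF i (φ i a') (φ i b')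
  /-- (DS3b) -/
  ds3b : ∀ i, ∀ a b c : V (i + 1), EF (i + 1) a b → EF (i + 1) b c → EF i (φ i a) (φ i c)

/-- The inverse limit vertex set `V_G`. -/
def TwLimit (S : TwinnedSeq) : Type :=
  {x : ∀ i, S.V i // ∀ i, x i = S.φ i (x (i + 1))}

/-- `V_G` as a subspace of the product of the discrete (finite) spaces `V i`. -/
instance (S : TwinnedSeq) : TopologicalSpace (TwLimit S) :=
  letI : ∀ i, TopologicalSpace (S.V i) := fun _ => ⊥
  inferInstanceAs (TopologicalSpace {x : ∀ i, S.V i // ∀ i, x i = S.φ i (x (i + 1))})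

/-- The inverse limit relation `E_G`. -/
def limEG (S : TwinnedSeq) (x y : TwLimit S) : Prop :=
  ∀ i, S.EG i (x.1 i) (y.1 i)

/-- The inverse limit relation `E_F`. -/
def limEF (S : TwinnedSeq) (x y : TwLimit S) : Prop :=
  ∀ i, S.EF i (x.1 i) (y.1 i)

/-- For an inverse sequence of twinned graph homomorphisms, every `x ∈ V_G` has an
`E_G`-successor: the set `E_G x = {y ∈ V_G : (x, y) ∈ E_G}` is nonempty. -/
theorem limEG_successor_nonempty (S : TwinnedSeq) (x : TwLimit S) :
    ∃ y : TwLimit S, limEG S x y := by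
  classical
  open CategoryTheory in
  -- The system of successor sets
  let Sub : ℕ → Type := fun n => {w : S.V n // S.EG n (x.1 n) w}
  let f : ∀ n, Sub (n + 1) → Sub n := fun n w =>
    ⟨S.φ n w.1, by rw [x.2 n]; exact S.ds1_hom n _ _ w.2⟩
  let F : ℕᵒᵖ ⥤ Type := Functor.ofOpSequence (fun n => TypeCat.ofHom (f n))
  haveI : ∀ n, Fintype (S.V n) := S.fintype
  haveI : ∀ j : ℕᵒᵖ, Finite (F.obj j) := fun j =>
    Subtype.finite
  haveI : ∀ j : ℕᵒᵖ, Nonempty (F.obj j) := fun j => by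
    obtain ⟨w, hw⟩ := S.ds1_out j.unop (x.1 j.unop)
    exact ⟨⟨w, hw⟩⟩
  obtain ⟨s, hs⟩ := nonempty_sections_of_finite_inverse_system F
  refine ⟨⟨fun n => (s (Opposite.op n)).1, fun n => ?_⟩, fun n => (s (Opposite.op n)).2⟩
  have key := hs (j := Opposite.op (n + 1)) (j' := Opposite.op n)
    (homOfLE (Nat.le_add_right n 1)).op
  rw [Functor.ofOpSequence_map_homOfLE_succ] at key
  exact congrArg Subtype.val key.symm
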